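/- Fix a dataset $(X,y)$ and starting weights $w \in [0,1]^n$. The greedy residual-thresholding procedure, which repeatedly zeroes the weight of the point with the largest absolute residual of the weighted OLS fit until all residuals are at most the threshold, is monotone in the threshold: if $R \le R'$ and $u, u'$ denote its outputs with thresholds $R, R'$ respectively, then $u_i \le u'_i$ for all $i \in [n]$. -/

import Mathlib

open Matrix

/-- The weighted OLS solution `β_w = (Xᵀ diag(w) X)⁻¹ Xᵀ diag(w) y`. -/
noncomputable def weightedOLS {n d : ℕ} (X : Matrix (Fin n) (Fin d) ℝ)
    (y : Fin n → ℝ) (w : Fin n → ℝ) : Fin d → ℝ :=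
  (Xᵀ * Matrix.diagonal w * X)⁻¹ *ᵥ (Xᵀ *ᵥ fun i => w i * y i)

/-- Absolute residual of point `i` under the weighted OLS fit with weights `w`. -/
noncomputable def residW {n d : ℕ} (X : Matrix (Fin n) (Fin d) ℝ)
    (y : Fin n → ℝ) (w : Fin n → ℝ) (i : Fin n) : ℝ :=
  |y i - X i ⬝ᵥ weightedOLS X y w|

/-- One pass of greedy residual thresholding with fuel: while some supported point
has residual exceeding `R`, zero out the weight of the (least-index) point with
the largest absolute residual. -/
noncomputable def residualThresholding {n d : ℕ} (X : Matrix (Fin n) (Fin d) ℝ)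
    (y : Fin n → ℝ) (R : ℝ) : ℕ → (Fin n → ℝ) → (Fin n → ℝ)
  | 0, w => w
  | (m + 1), w =>
    let S : Finset (Fin n) := Finset.univ.filter (fun i => w i ≠ 0)
    let bad : Finset (Fin n) := S.filter (fun i => R < residW X y w i)
    if hbad : bad.Nonempty then
      have hS : S.Nonempty := hbad.mono (Finset.filter_subset _ _)
      let mx : ℝ := S.sup' hS (fun i => residW X y w i)
      let arg : Finset (Fin n) := S.filter (fun i => residW X y w i = mx)
      if harg : arg.Nonempty then
        residualThresholding X y R m (Function.update w (arg.min' harg) 0)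
      else w
    else w

lemma update_le {n : ℕ} (w : Fin n → ℝ) (hw : ∀ i, 0 ≤ w i) (j : Fin n) (i : Fin n) :
    Function.update w j 0 i ≤ w i := by
  rcases eq_or_ne i j with h | h
  · subst h; simpa [Function.update_self] using hw i
  · simp [Function.update_of_ne h]

lemma update_nonneg {n : ℕ} (w : Fin n → ℝ) (hw : ∀ i, 0 ≤ w i) (j : Fin n) (i : Fin n) :
    0 ≤ Function.update w j 0 i := by
  rcases eq_or_ne i j with h | h
  · subst h; simp
  · simpa [Function.update_of_ne h] using hw i

lemma rt_le {n d : ℕ} (X : Matrix (Fin n) (Fin d) ℝ) (y : Fin n → ℝ) (R : ℝ) :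
    ∀ m (w : Fin n → ℝ), (∀ i, 0 ≤ w i) → ∀ i, residualThresholding X y R m w i ≤ w i := by
  intro m
  induction m with
  | zero => intro w hw i; simp [residualThresholding]
  | succ m ih =>
    intro w hw i
    rw [residualThresholding]
    dsimp only
    split_ifs with h1 h2
    · exact le_trans (ih _ (update_nonneg w hw _) i) (update_le w hw _ i)
    · exact le_refl _
    · exact le_refl _

lemma rt_mono_aux {n d : ℕ} (X : Matrix (Fin n) (Fin d) ℝ) (y : Fin n → ℝ)
    (R R' : ℝ) (hR : R ≤ R') :
    ∀ m (w : Fin n → ℝ), (∀ i, 0 ≤ w i) → ∀ i,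
      residualThresholding X y R m w i ≤ residualThresholding X y R' m w i := by
  intro m
  induction m with
  | zero => intro w hw i; simp [residualThresholding]
  | succ m ih =>
    intro w hw i
    by_cases hb' : ((Finset.univ.filter (fun i => w i ≠ 0)).filter
        (fun i => R' < residW X y w i)).Nonempty
    · have hb : ((Finset.univ.filter (fun i => w i ≠ 0)).filter
          (fun i => R < residW X y w i)).Nonempty := by
        obtain ⟨j, hj⟩ := hb'
        rw [Finset.mem_filter] at hj
        exact ⟨j, Finset.mem_filter.2 ⟨hj.1, lt_of_le_of_lt hR hj.2⟩⟩
      rw [residualThresholding, residualThresholding]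
      rw [dif_pos hb, dif_pos hb']
      split_ifs with h1
      · exact ih _ (update_nonneg w hw _) i
      · exact le_refl _
    · conv_rhs => rw [residualThresholding]
      rw [dif_neg hb']
      exact rt_le X y R (m+1) w hw i

theorem residualThresholding_monotone {n d : ℕ} (X : Matrix (Fin n) (Fin d) ℝ)
    (y : Fin n → ℝ) (w : Fin n → ℝ)
    (hw : ∀ i, 0 ≤ w i ∧ w i ≤ 1) (R R' : ℝ) (hR : R ≤ R') :
    ∀ i, residualThresholding X y R n w i ≤ residualThresholding X y R' n w i :=
  rt_mono_aux X y R R' hR n w (fun i => (hw i).1)
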